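/- Let d, K ≥ 1 and H > 0, let W be a nonempty compact convex subset of [0, H]^d ⊆ ℝ^d, and let v̂¹, …, v̂^K ∈ [0, H]^d. Let B̄ denote the closed unit ball of ℝ^d, let θ¹ ∈ B̄, and for each k let x^k ∈ W attain max_{x ∈ W} ⟪θ^k, x⟫ and set θ^{k+1} = Π_{B̄}( θ^k + η_k (v̂^k − x^k) ) with η_k = 1/(√d · H · √k). Then dist( (1/K) ∑_{k=1}^{K} v̂^k, W ) ≤ (1/K) ∑_{k=1}^{K} ( ⟪θ^k, v̂^k⟫ − max_{x ∈ W} ⟪θ^k, x⟫ ) + 6 √d H / √K. -/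

import Mathlib

/-- The metric projection onto the closed unit ball of Euclidean space:
it is the identity inside the ball and radial normalization outside. -/
noncomputable def projBall {d : ℕ} (y : EuclideanSpace ℝ (Fin d)) :
    EuclideanSpace ℝ (Fin d) :=
  if ‖y‖ ≤ 1 then y else ‖y‖⁻¹ • y

open scoped RealInnerProductSpace

lemma projBall_norm_le {d : ℕ} (y : EuclideanSpace ℝ (Fin d)) : ‖projBall y‖ ≤ 1 := by
  unfold projBall
  split_ifs with h
  · exact h
  · push_neg at h
    have h0 : ‖y‖ ≠ 0 := by positivity
    rw [norm_smul, norm_inv, norm_norm, inv_mul_cancel₀ (by linarith : ‖y‖ ≠ 0)]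

lemma projBall_contract {d : ℕ} (y u : EuclideanSpace ℝ (Fin d)) (hu : ‖u‖ ≤ 1) :
    ‖projBall y - u‖ ≤ ‖y - u‖ := by
  unfold projBall
  split_ifs with h
  · exact le_rfl
  · push_neg at h
    have h0 : (0:ℝ) < ‖y‖ := by linarith
    have hin : ⟪y, u⟫ ≤ ‖y‖ :=
      le_trans (real_inner_le_norm y u) (by nlinarith [norm_nonneg u])
    have ht : ‖y‖⁻¹ * ‖y‖ = 1 := inv_mul_cancel₀ h0.ne'
    have ht1 : ‖y‖⁻¹ ≤ 1 := by
      nlinarith [inv_nonneg.mpr h0.le]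
    have hsq : ‖(‖y‖⁻¹ • y) - u‖^2 ≤ ‖y - u‖^2 := by
      rw [norm_sub_sq_real, norm_sub_sq_real, real_inner_smul_left, norm_smul, norm_inv,
        norm_norm, inv_mul_cancel₀ h0.ne']
      nlinarith [mul_le_mul_of_nonneg_right hin (by linarith : (0:ℝ) ≤ 1 - ‖y‖⁻¹),
        sq_nonneg (‖y‖ - 1)]
    nlinarith [norm_nonneg ((‖y‖⁻¹ • y) - u), norm_nonneg (y - u)]

lemma sum_inv_sqrt_le (K : ℕ) :
    ∑ k ∈ Finset.Icc 1 K, (Real.sqrt k)⁻¹ ≤ 2 * Real.sqrt K := by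
  induction K with
  | zero => simp
  | succ n ih =>
    rw [Finset.sum_Icc_succ_top (by omega)]
    have hc : ((n+1 : ℕ) : ℝ) = (n:ℝ) + 1 := by push_cast; ring
    have h2 : 0 < Real.sqrt ((n:ℝ)+1) := Real.sqrt_pos.mpr (by positivity)
    have h3 : Real.sqrt ((n:ℝ)+1) * Real.sqrt ((n:ℝ)+1) = (n:ℝ)+1 :=
      Real.mul_self_sqrt (by positivity)
    have h4 : Real.sqrt (n:ℝ) * Real.sqrt (n:ℝ) = (n:ℝ) := Real.mul_self_sqrt (by positivity)
    have key : (Real.sqrt ((n:ℝ)+1))⁻¹ ≤ 2 * Real.sqrt ((n:ℝ)+1) - 2 * Real.sqrt (n:ℝ) := by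
      rw [inv_eq_one_div, div_le_iff₀ h2]
      nlinarith [sq_nonneg (Real.sqrt ((n:ℝ)+1) - Real.sqrt (n:ℝ))]
    rw [hc]
    linarith


set_option maxHeartbeats 1000000 in
/-- Deterministic core of the projection-free (OCO-based) dual update
guarantee: the distance of the average of the `v̂^k` to the compact convex
target set `W ⊆ [0,H]^d` is controlled by the average linearized losses plus
the online subgradient regret term `6√d H/√K`. -/
theorem stmt_11 (d K : ℕ) (hd : 1 ≤ d) (hK : 1 ≤ K) (H : ℝ) (hH : 0 < H)
    (W : Set (EuclideanSpace ℝ (Fin d)))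
    (hne : W.Nonempty) (hcomp : IsCompact W) (hconv : Convex ℝ W)
    (hWbox : ∀ w ∈ W, ∀ j : Fin d, w j ∈ Set.Icc (0 : ℝ) H)
    (v : ℕ → EuclideanSpace ℝ (Fin d))
    (hv : ∀ k ∈ Finset.Icc 1 K, ∀ j : Fin d, v k j ∈ Set.Icc (0 : ℝ) H)
    (θ : ℕ → EuclideanSpace ℝ (Fin d)) (hθ1 : ‖θ 1‖ ≤ 1)
    (x : ℕ → EuclideanSpace ℝ (Fin d))
    (hx : ∀ k ∈ Finset.Icc 1 K, x k ∈ W ∧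
      IsGreatest ((fun w => (inner ℝ (θ k) w : ℝ)) '' W) (inner ℝ (θ k) (x k)))
    (hupd : ∀ k ∈ Finset.Icc 1 K,
      θ (k + 1) = projBall (θ k + (Real.sqrt d * H * Real.sqrt k)⁻¹ • (v k - x k))) :
    Metric.infDist ((K : ℝ)⁻¹ • ∑ k ∈ Finset.Icc 1 K, v k) W
      ≤ (K : ℝ)⁻¹ * ∑ k ∈ Finset.Icc 1 K,
          ((inner ℝ (θ k) (v k) : ℝ) - sSup ((fun w => (inner ℝ (θ k) w : ℝ)) '' W))
        + 6 * Real.sqrt d * H / Real.sqrt K := by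
  classical
  have hK0 : (0:ℝ) < K := by exact_mod_cast hK
  have hd0 : (0:ℝ) < Real.sqrt d := Real.sqrt_pos.mpr (by exact_mod_cast hd)
  set G : ℝ := Real.sqrt d * H with hGdef
  have hG : 0 < G := mul_pos hd0 hH
  have hG2 : G^2 = d * H^2 := by
    rw [hGdef, mul_pow, Real.sq_sqrt (by positivity)]
  -- gradient norm bound
  have hgnorm : ∀ k ∈ Finset.Icc 1 K, ‖v k - x k‖ ≤ G := by
    intro k hk
    have hvk := hv k hk
    have hxk := hWbox (x k) (hx k hk).1
    have hsq : ‖v k - x k‖^2 ≤ d * H^2 := by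
      rw [EuclideanSpace.norm_eq, Real.sq_sqrt (by positivity)]
      have hle : ∀ j : Fin d, ‖(v k - x k) j‖^2 ≤ H^2 := by
        intro j
        have h1 := hvk j
        have h2 := hxk j
        simp only [Set.mem_Icc] at h1 h2
        have he : (v k - x k) j = v k j - x k j := rfl
        rw [he, Real.norm_eq_abs, sq_abs]
        nlinarith [h1.1, h1.2, h2.1, h2.2]
      calc ∑ j : Fin d, ‖(v k - x k) j‖^2 ≤ ∑ _j : Fin d, H^2 :=
            Finset.sum_le_sum (fun j _ => hle j)
        _ = d * H^2 := by simp [Finset.sum_const, Finset.card_univ]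
    nlinarith [norm_nonneg (v k - x k), hG.le, hG2]
  -- iterates remain in the ball
  have hθle : ∀ k, 1 ≤ k → k ≤ K + 1 → ‖θ k‖ ≤ 1 := by
    intro k hk1 hk2
    rcases Nat.lt_or_ge k 2 with hk | hk
    · interval_cases k
      exact hθ1
    · obtain ⟨j, rfl⟩ : ∃ j, k = j + 1 := ⟨k - 1, by omega⟩
      rw [hupd j (Finset.mem_Icc.mpr ⟨by omega, by omega⟩)]
      exact projBall_norm_le _
  -- key OGD induction
  have key : ∀ (u : EuclideanSpace ℝ (Fin d)), ‖u‖ ≤ 1 → ∀ m, m ≤ K →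
      ∑ k ∈ Finset.Icc 1 m,
        (⟪v k - x k, u⟫ - ⟪v k - x k, θ k⟫ - (G * Real.sqrt k)⁻¹ * G^2 / 2)
      ≤ (4 - ‖θ (m+1) - u‖^2) * (G * Real.sqrt m / 2) := by
    intro u hu m
    induction m with
    | zero => intro _; simp
    | succ n ih =>
      intro hm
      have hn : n ≤ K := by omega
      have hmem : n + 1 ∈ Finset.Icc 1 K := Finset.mem_Icc.mpr ⟨by omega, hm⟩
      have hs : (0:ℝ) < Real.sqrt ((n+1 : ℕ) : ℝ) := Real.sqrt_pos.mpr (by positivity)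
      rw [Finset.sum_Icc_succ_top (by omega : 1 ≤ n + 1)]
      set g : EuclideanSpace ℝ (Fin d) := v (n+1) - x (n+1) with hgdef
      set η : ℝ := (G * Real.sqrt ((n+1 : ℕ) : ℝ))⁻¹ with hηdef
      clear_value g η
      have hgn : ‖g‖ ≤ G := hgdef ▸ hgnorm _ hmem
      have hηpos : 0 < η := hηdef ▸ inv_pos.mpr (mul_pos hG hs)
      have hupd' := hupd (n+1) hmem
      rw [← hgdef, ← hηdef] at hupd'
      have hb : ‖θ (n+1+1) - u‖^2
          ≤ ‖θ (n+1) - u‖^2 + 2*(η*⟪θ (n+1) - u, g⟫) + η^2*G^2 := by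
        have h1 : ‖θ (n+1+1) - u‖ ≤ ‖(θ (n+1) - u) + η • g‖ := by
          rw [hupd']
          have hpc := projBall_contract (θ (n+1) + η • g) u hu
          rw [show θ (n+1) + η • g - u = θ (n+1) - u + η • g from by abel] at hpc
          exact hpc
        have h3 : ‖(θ (n+1) - u) + η • g‖^2
            = ‖θ (n+1) - u‖^2 + 2*(η*⟪θ (n+1) - u, g⟫) + η^2*‖g‖^2 := by
          rw [norm_add_sq_real, real_inner_smul_right, norm_smul, Real.norm_eq_abs,
            abs_of_pos hηpos, mul_pow]
        have h4 : ‖θ (n+1+1) - u‖^2 ≤ ‖(θ (n+1) - u) + η • g‖^2 :=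
          pow_le_pow_left₀ (norm_nonneg _) h1 2
        nlinarith [h4, h3, sq_nonneg η, norm_nonneg g, hgn, mul_le_mul_of_nonneg_left
          (mul_le_mul hgn hgn (norm_nonneg g) hG.le) (sq_nonneg η)]
      have hcm : η * (G * Real.sqrt ((n+1 : ℕ) : ℝ)) = 1 := by
        rw [hηdef]
        exact inv_mul_cancel₀ (by positivity)
      have hI : ⟪g, u⟫ - ⟪g, θ (n+1)⟫ = -⟪θ (n+1) - u, g⟫ := by
        rw [real_inner_comm u g, real_inner_comm (θ (n+1)) g, inner_sub_left]
        ring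
      have ha4 : ‖θ (n+1) - u‖^2 ≤ 4 := by
        have h2 : ‖θ (n+1) - u‖ ≤ 2 := le_trans (norm_sub_le _ _)
          (by linarith [hθle (n+1) (by omega) (by omega)])
        calc ‖θ (n+1) - u‖^2 ≤ 2^2 := pow_le_pow_left₀ (norm_nonneg _) h2 2
          _ = 4 := by norm_num
      have hcc : G * Real.sqrt (n : ℝ) / 2 ≤ G * Real.sqrt ((n+1 : ℕ) : ℝ) / 2 := by
        have := Real.sqrt_le_sqrt (show ((n : ℕ) : ℝ) ≤ ((n+1 : ℕ) : ℝ) by push_cast; linarith)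
        nlinarith [hG]
      have h1 : -⟪θ (n+1) - u, g⟫ - η*G^2/2
          ≤ (‖θ (n+1) - u‖^2 - ‖θ (n+1+1) - u‖^2) * (G * Real.sqrt ((n+1 : ℕ) : ℝ) / 2) := by
        have hmul := mul_le_mul_of_nonneg_right
          (show -(2*(η*⟪θ (n+1) - u, g⟫)) - η^2*G^2 ≤ ‖θ (n+1) - u‖^2 - ‖θ (n+1+1) - u‖^2
            from by linarith)
          (show (0:ℝ) ≤ G * Real.sqrt ((n+1 : ℕ) : ℝ) / 2 from by positivity)
        have heq : (-(2*(η*⟪θ (n+1) - u, g⟫)) - η^2*G^2) * (G * Real.sqrt ((n+1 : ℕ) : ℝ) / 2)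
            = -⟪θ (n+1) - u, g⟫ - η*G^2/2 := by
          linear_combination (-(⟪θ (n+1) - u, g⟫) - η*G^2/2) * hcm
        linarith
      have h3 : (4 - ‖θ (n+1) - u‖^2) * (G * Real.sqrt (n : ℝ) / 2)
          ≤ (4 - ‖θ (n+1) - u‖^2) * (G * Real.sqrt ((n+1 : ℕ) : ℝ) / 2) :=
        mul_le_mul_of_nonneg_left hcc (by linarith)
      have hIH := ih hn
      nlinarith [hIH, h1, h3, hI]
  -- regret bound
  have regret : ∀ u : EuclideanSpace ℝ (Fin d), ‖u‖ ≤ 1 →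
      ∑ k ∈ Finset.Icc 1 K, (⟪v k - x k, u⟫ - ⟪v k - x k, θ k⟫)
        ≤ 3 * G * Real.sqrt K := by
    intro u hu
    have h1 := key u hu K le_rfl
    have h2 : ∑ k ∈ Finset.Icc 1 K, ((G * Real.sqrt k)⁻¹ * G^2 / 2)
        ≤ G * Real.sqrt K := by
      have heq : ∀ k ∈ Finset.Icc 1 K, (G * Real.sqrt k)⁻¹ * G^2 / 2
          = (G/2) * (Real.sqrt k)⁻¹ := by
        intro k hk
        have hk1 : 1 ≤ k := (Finset.mem_Icc.mp hk).1
        have hs : (0:ℝ) < Real.sqrt k := Real.sqrt_pos.mpr (by exact_mod_cast hk1)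
        field_simp
      rw [Finset.sum_congr rfl heq, ← Finset.mul_sum]
      have h5 := sum_inv_sqrt_le K
      have h6 : (0:ℝ) ≤ ∑ k ∈ Finset.Icc 1 K, (Real.sqrt k)⁻¹ :=
        Finset.sum_nonneg (fun k _ => by positivity)
      nlinarith [hG]
    have h3 : ∑ k ∈ Finset.Icc 1 K, (⟪v k - x k, u⟫ - ⟪v k - x k, θ k⟫)
        = ∑ k ∈ Finset.Icc 1 K,
            (⟪v k - x k, u⟫ - ⟪v k - x k, θ k⟫ - (G * Real.sqrt k)⁻¹ * G^2 / 2)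
          + ∑ k ∈ Finset.Icc 1 K, ((G * Real.sqrt k)⁻¹ * G^2 / 2) := by
      rw [← Finset.sum_add_distrib]
      exact Finset.sum_congr rfl (fun k _ => by ring)
    have h4 : (4 - ‖θ (K+1) - u‖^2) * (G * Real.sqrt K / 2) ≤ 2 * G * Real.sqrt K := by
      nlinarith [mul_nonneg (sq_nonneg ‖θ (K+1) - u‖)
        (mul_nonneg hG.le (Real.sqrt_nonneg (K:ℝ))), hG.le, Real.sqrt_nonneg (K:ℝ),
        mul_nonneg hG.le (Real.sqrt_nonneg (K:ℝ))]
    linarith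
  -- duality / projection part
  set vbar : EuclideanSpace ℝ (Fin d) := (K:ℝ)⁻¹ • ∑ k ∈ Finset.Icc 1 K, v k with hvbar
  obtain ⟨p, hpW, hp⟩ := hcomp.exists_infDist_eq_dist hne vbar
  have hpn : Metric.infDist vbar W = ‖vbar - p‖ := by rw [hp, dist_eq_norm]
  have hproj : ∀ w ∈ W, ⟪vbar - p, w - p⟫ ≤ 0 := by
    have hne' : Nonempty W := hne.to_subtype
    have heq : ‖vbar - p‖ = ⨅ w : W, ‖vbar - w‖ := by
      rw [← hpn, Metric.infDist_eq_iInf]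
      simp only [dist_eq_norm]
    exact (norm_eq_iInf_iff_real_inner_le_zero hconv hpW).mp heq
  set δ : ℝ := ‖vbar - p‖ with hδ
  set us : EuclideanSpace ℝ (Fin d) := δ⁻¹ • (vbar - p) with hus
  have hδ0 : 0 ≤ δ := norm_nonneg _
  have husn : ‖us‖ ≤ 1 := by
    rw [hus, norm_smul, Real.norm_eq_abs, abs_of_nonneg (inv_nonneg.mpr hδ0), ← hδ]
    rcases eq_or_lt_of_le hδ0 with h | h
    · rw [← h]; norm_num
    · rw [inv_mul_cancel₀ h.ne']
  have hval : ⟪us, vbar - p⟫ = δ := by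
    rw [hus, real_inner_smul_left, real_inner_self_eq_norm_mul_norm, ← hδ]
    rcases eq_or_lt_of_le hδ0 with h | h
    · rw [← h]; ring
    · field_simp
  have hxp : ∀ k ∈ Finset.Icc 1 K, ⟪us, x k⟫ ≤ ⟪us, p⟫ := by
    intro k hk
    have h1 := hproj (x k) (hx k hk).1
    have h2 : ⟪us, x k - p⟫ ≤ 0 := by
      rw [hus, real_inner_smul_left]
      have := mul_le_mul_of_nonneg_left h1 (inv_nonneg.mpr hδ0)
      simpa using this
    rw [inner_sub_right] at h2
    linarith
  -- main chain
  have hsum : (K:ℝ) * Metric.infDist vbar W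
      ≤ ∑ k ∈ Finset.Icc 1 K, ⟪v k - x k, us⟫ := by
    have h1 : ∑ k ∈ Finset.Icc 1 K, ⟪v k - x k, us⟫
        = ∑ k ∈ Finset.Icc 1 K, ⟪us, v k⟫ - ∑ k ∈ Finset.Icc 1 K, ⟪us, x k⟫ := by
      rw [← Finset.sum_sub_distrib]
      refine Finset.sum_congr rfl (fun k _ => ?_)
      rw [real_inner_comm, inner_sub_right]
    have h2 : ⟪us, vbar⟫ = (K:ℝ)⁻¹ * ∑ k ∈ Finset.Icc 1 K, ⟪us, v k⟫ := by
      rw [hvbar, real_inner_smul_right, inner_sum]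
    have h3 : ∑ k ∈ Finset.Icc 1 K, ⟪us, x k⟫ ≤ (K:ℝ) * ⟪us, p⟫ := by
      have := Finset.sum_le_sum hxp
      rw [Finset.sum_const, Nat.card_Icc] at this
      simpa using this
    have h4 : Metric.infDist vbar W = ⟪us, vbar⟫ - ⟪us, p⟫ := by
      rw [hpn, ← hval, inner_sub_right]
    rw [h4, h1]
    have h5 : (K:ℝ) * ⟪us, vbar⟫ = ∑ k ∈ Finset.Icc 1 K, ⟪us, v k⟫ := by
      rw [h2]
      field_simp
    nlinarith [h3, h5]
  -- conclusion
  have hreg := regret us husn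
  have hS1 : ∑ k ∈ Finset.Icc 1 K,
        ((inner ℝ (θ k) (v k) : ℝ) - sSup ((fun w => (inner ℝ (θ k) w : ℝ)) '' W))
      = ∑ k ∈ Finset.Icc 1 K, ⟪v k - x k, θ k⟫ := by
    refine Finset.sum_congr rfl (fun k hk => ?_)
    rw [(hx k hk).2.csSup_eq, inner_sub_left, real_inner_comm (θ k) (v k),
      real_inner_comm (θ k) (x k)]
  have hsqrtK : 0 < Real.sqrt K := Real.sqrt_pos.mpr hK0
  have hKsq : Real.sqrt K * Real.sqrt K = (K:ℝ) := Real.mul_self_sqrt hK0.le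
  rw [hS1]
  set S1 : ℝ := ∑ k ∈ Finset.Icc 1 K, ⟪v k - x k, θ k⟫ with hS1def
  have hsplit : ∑ k ∈ Finset.Icc 1 K, (⟪v k - x k, us⟫ - ⟪v k - x k, θ k⟫)
      = ∑ k ∈ Finset.Icc 1 K, ⟪v k - x k, us⟫ - ∑ k ∈ Finset.Icc 1 K, ⟪v k - x k, θ k⟫ :=
    Finset.sum_sub_distrib _ _
  have hfin : (K:ℝ) * Metric.infDist vbar W ≤ S1 + 3*G*Real.sqrt K := by
    rw [hS1def]
    linarith [hsum, hreg, hsplit]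
  have h2 : 3*G*Real.sqrt K / K = 3*G/Real.sqrt K := by
    rw [div_eq_div_iff hK0.ne' hsqrtK.ne']
    linear_combination 3*G*hKsq
  have h6 : 6 * Real.sqrt d * H / Real.sqrt K = 2 * (3*G/Real.sqrt K) := by
    rw [hGdef]
    ring
  have h7 : 0 ≤ 3*G/Real.sqrt K := by positivity
  have h8 : Metric.infDist vbar W ≤ (S1 + 3*G*Real.sqrt K)/K := by
    rw [le_div_iff₀ hK0]
    linarith [hfin]
  have h9 : (S1 + 3*G*Real.sqrt K)/K = (K:ℝ)⁻¹ * S1 + 3*G*Real.sqrt K / K := by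
    field_simp
  rw [h6]
  linarith [h8, h9.le, h2.le, h9.ge, h2.ge, h7]
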